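/- Assume the Continuum Hypothesis. Then every family (A_α)_{α<ω₂} of countable sets contains a subfamily of cardinality ω₂ forming a Δ-system: there is a set B ⊆ ω₂ of cardinality ω₂ and a (countable) set R such that A_α ∩ A_β = R for all distinct α, β ∈ B. -/

import Mathlib

open Cardinal Set Ordinal

universe u v w

namespace DS


lemma ch_transfer (CH : (continuum : Cardinal.{v}) = aleph 1) :
    (continuum : Cardinal.{w}) = aleph 1 := by
  apply Cardinal.lift_injective.{v}
  rw [lift_continuum, lift_aleph, Ordinal.lift_one]
  have h := congrArg (Cardinal.lift.{w}) CH
  rwa [lift_continuum, lift_aleph, Ordinal.lift_one] at h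

noncomputable abbrev kap : Ordinal.{u} := (aleph 2).ord

abbrev Idx : Type (u + 1) := {o : Ordinal.{u} // o < kap.{u}}

lemma aleph2_regular : Cardinal.IsRegular (aleph 2 : Cardinal.{u}) := by
  have h := isRegular_aleph_succ (1 : Ordinal.{u})
  rwa [show Order.succ (1 : Ordinal.{u}) = 2 by
    rw [← Ordinal.add_one_eq_succ]; norm_num] at h

lemma cof_kap : (kap.{u}).cof = aleph 2 := aleph2_regular.cof_eq

lemma mk_Idx : #(Idx.{u}) = (aleph 2 : Cardinal.{u + 1}) := by
  have h := Ordinal.mk_Iio_ordinal (kap.{u})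
  rw [card_ord, lift_aleph, Ordinal.lift_ofNat] at h
  exact h

lemma card_le_a1 {o : Ordinal.{u}} (h : o < kap.{u}) : o.card ≤ aleph 1 := by
  have := Cardinal.lt_ord.mp h
  rw [show (2 : Ordinal.{u}) = Order.succ 1 by rw [← Ordinal.add_one_eq_succ]; norm_num,
    aleph_succ] at this
  exact Order.lt_succ_iff.mp this

lemma lift_a1 : Cardinal.lift.{u+1} (aleph 1 : Cardinal.{u}) = aleph 1 := by
  rw [lift_aleph, Ordinal.lift_one]

lemma mk_Iio_le_a1 {o : Ordinal.{u}} (h : o < kap.{u}) :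
    #(Set.Iio o) ≤ (aleph 1 : Cardinal.{u+1}) := by
  rw [Ordinal.mk_Iio_ordinal, ← lift_a1]
  exact Cardinal.lift_le.mpr (card_le_a1 h)

lemma sSup_lt_kap {s : Set Ordinal.{u}} (hcard : #s ≤ (aleph 1 : Cardinal.{u + 1}))
    (hb : ∀ x ∈ s, x < kap.{u}) : sSup s < kap.{u} := by
  have hsmall : Small.{u} s :=
    Ordinal.bddAbove_iff_small.mp ⟨kap, fun x hx => (hb x hx).le⟩
  have hs : s = Set.range (fun b : Shrink.{u} s => (((equivShrink s).symm b : s) : Ordinal)) := by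
    ext x; constructor
    · intro hx; exact ⟨equivShrink s ⟨x, hx⟩, by simp⟩
    · rintro ⟨b, rfl⟩; exact ((equivShrink s).symm b).2
  rw [hs]
  refine Ordinal.iSup_lt_ord ?_ (fun i => hb _ ((equivShrink s).symm i).2)
  rw [cof_kap]
  have h1 : Cardinal.lift.{u} #s = Cardinal.lift.{u+1} #(Shrink.{u} s) :=
    Cardinal.lift_mk_eq'.mpr ⟨equivShrink s⟩
  rw [Cardinal.lift_id'.{u, u+1}] at h1
  have h2 : #(Shrink.{u} s) ≤ (aleph 1 : Cardinal.{u}) := by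
    rw [← Cardinal.lift_le.{u+1}, ← h1, lift_a1]; exact hcard
  exact h2.trans_lt (aleph_lt_aleph.mpr one_lt_two)

lemma mk_le_of_cover {ι : Type u} {X : Type u} (C : ι → Set X) (S : Set X)
    (hι : #ι ≤ (aleph 1 : Cardinal.{u})) (hC : ∀ i, #(C i) ≤ aleph 1)
    (hcov : S ⊆ ⋃ i, C i) : #S ≤ (aleph 1 : Cardinal.{u}) := by
  calc #S ≤ #(⋃ i, C i) := Cardinal.mk_le_mk_of_subset hcov
    _ ≤ #ι * ⨆ i, #(C i) := Cardinal.mk_iUnion_le C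
    _ ≤ aleph 1 * aleph 1 := by
        refine mul_le_mul' hι ?_
        rcases isEmpty_or_nonempty ι with h | h
        · rw [iSup_of_empty']
          simp [csSup_empty]
        · exact ciSup_le' hC
    _ = aleph 1 := Cardinal.mul_eq_self (aleph0_le_aleph 1)



-- codes for countable subsets of Iio γ
noncomputable def Phi (γ : Ordinal.{u}) (c : ℕ → Option (Set.Iio γ)) : Set Ordinal.{u} :=
  Subtype.val '' {v : Set.Iio γ | some v ∈ Set.range c}

lemma Phi_countable (γ : Ordinal.{u}) (c : ℕ → Option (Set.Iio γ)) : (Phi γ c).Countable := by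
  apply Set.Countable.image
  exact (Set.countable_range c).preimage (Option.some_injective _)

lemma Phi_subset (γ : Ordinal.{u}) (c : ℕ → Option (Set.Iio γ)) : Phi γ c ⊆ Set.Iio γ := by
  rintro x ⟨v, _, rfl⟩; exact v.2

lemma Phi_surj (γ : Ordinal.{u}) {s : Set Ordinal.{u}} (hs : s.Countable) (hsub : s ⊆ Set.Iio γ) :
    ∃ c : ℕ → Option (Set.Iio γ), Phi γ c = s := by
  have hs' : {v : Set.Iio γ | (v : Ordinal) ∈ s}.Countable :=
    (hs.preimage Subtype.val_injective)
  have himg : ∀ c, Phi γ c = Subtype.val '' {v : Set.Iio γ | some v ∈ Set.range c} := fun _ => rfl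
  rcases Set.eq_empty_or_nonempty {v : Set.Iio γ | (v : Ordinal) ∈ s} with he | hne
  · refine ⟨fun _ => none, ?_⟩
    rw [himg]
    have : {v : Set.Iio γ | some v ∈ Set.range (fun _ : ℕ => (none : Option (Set.Iio γ)))} = ∅ := by
      ext v; simp
    rw [this]
    simp only [Set.image_empty]
    symm; rw [Set.eq_empty_iff_forall_notMem]
    intro x hx
    have : (⟨x, hsub hx⟩ : Set.Iio γ) ∈ {v : Set.Iio γ | (v : Ordinal) ∈ s} := hx
    rw [he] at this; exact this
  · obtain ⟨f, hf⟩ := hs'.exists_eq_range hne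
    refine ⟨fun n => some (f n), ?_⟩
    rw [himg]
    have h2 : {v : Set.Iio γ | some v ∈ Set.range (fun n => some (f n))} =
        {v : Set.Iio γ | (v : Ordinal) ∈ s} := by
      ext v
      simp only [Set.mem_setOf_eq, Set.mem_range, Option.some_inj]
      constructor
      · rintro ⟨n, rfl⟩
        have : f n ∈ {v : Set.Iio γ | (v : Ordinal) ∈ s} := by rw [hf]; exact ⟨n, rfl⟩
        exact this
      · intro hv
        have : v ∈ Set.range f := by rw [← hf]; exact hv
        exact this
    rw [h2]
    ext x
    simp only [Set.mem_image, Set.mem_setOf_eq]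
    constructor
    · rintro ⟨v, hv, rfl⟩; exact hv
    · intro hx; exact ⟨⟨x, hsub hx⟩, hx, rfl⟩

lemma mk_codes_le (CH : (continuum : Cardinal.{u+1}) = aleph 1) {γ : Ordinal.{u}}
    (hγ : γ.card ≤ (aleph 1 : Cardinal.{u})) :
    #(ℕ → Option (Set.Iio γ)) ≤ (aleph 1 : Cardinal.{u+1}) := by
  have h1 : #(Option (Set.Iio γ)) ≤ (aleph 1 : Cardinal.{u+1}) := by
    rw [mk_option, Ordinal.mk_Iio_ordinal]
    calc Cardinal.lift.{u+1} γ.card + 1 ≤ (aleph 1 : Cardinal.{u+1}) + 1 := by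
          refine add_le_add_left ?_ 1
          rw [show (aleph 1 : Cardinal.{u+1}) = Cardinal.lift.{u+1} (aleph 1 : Cardinal.{u}) by
            rw [lift_aleph, Ordinal.lift_one]]
          exact Cardinal.lift_le.mpr hγ
      _ = aleph 1 := Cardinal.add_one_eq (aleph0_le_aleph 1)
  calc #(ℕ → Option (Set.Iio γ)) = Cardinal.lift.{0} #(Option (Set.Iio γ)) ^
        Cardinal.lift.{u+1} #ℕ := Cardinal.mk_arrow _ _
    _ = #(Option (Set.Iio γ)) ^ (ℵ₀ : Cardinal.{u+1}) := by
        rw [Cardinal.lift_uzero, Cardinal.mk_nat, Cardinal.lift_aleph0]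
    _ ≤ (aleph 1 : Cardinal.{u+1}) ^ (ℵ₀ : Cardinal.{u+1}) :=
        Cardinal.power_le_power_right h1
    _ = aleph 1 := by rw [← CH, continuum_power_aleph0]





noncomputable abbrev om1 : Ordinal.{u} := (aleph 1).ord

lemma om1_lt_kap : om1.{u} < kap.{u} := by
  rw [Cardinal.ord_lt_ord]
  exact aleph_lt_aleph.mpr one_lt_two

lemma exists_gamma (A : Idx.{u} → Set Ordinal.{u}) (hc : ∀ o, (A o).Countable) :
    ∃ γ, γ < kap.{u} ∧ ∀ δ, δ < kap.{u} →
      ¬ (#{α : Idx.{u} | A α ∩ Set.Iio δ ⊆ Set.Iio γ} ≤ aleph 1) := by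
  by_contra H
  push_neg at H
  -- H : ∀ γ, γ < kap → ∃ δ, δ < kap ∧ # ≤ aleph 1
  choose D hD1 hD2 using H
  set D' : Ordinal.{u} → Ordinal.{u} := fun γ => if h : γ < kap then D γ h else 0 with hD'
  -- recursion
  set body : (ν : Ordinal.{u}) → ((μ : Ordinal.{u}) → μ < ν → Ordinal.{u}) → Ordinal.{u} :=
    fun ν IH => D' (sSup {x | ∃ μ, ∃ h : μ < ν, IH μ h = x}) with hbody
  set g : Ordinal.{u} → Ordinal.{u} := WellFounded.fix Ordinal.lt_wf body with hgdef
  have hgeq : ∀ ν, g ν = body ν (fun μ _ => g μ) := fun ν =>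
    WellFounded.fix_eq Ordinal.lt_wf body ν
  set sq : Ordinal.{u} → Ordinal.{u} := fun ν => sSup {x | ∃ μ, ∃ _ : μ < ν, g μ = x} with hsq
  have hg : ∀ ν, g ν = D' (sq ν) := fun ν => hgeq ν
  -- bounds
  have hbound : ∀ ν, ν < om1.{u} → sq ν < kap ∧ g ν < kap := by
    intro ν
    induction ν using Ordinal.induction with
    | h ν IH =>
      intro hν
      have hset : {x | ∃ μ, ∃ _ : μ < ν, g μ = x} =
          Set.range (fun μ : Set.Iio ν => g μ.1) := by
        ext x; constructor
        · rintro ⟨μ, hμ, rfl⟩; exact ⟨⟨μ, hμ⟩, rfl⟩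
        · rintro ⟨⟨μ, hμ⟩, rfl⟩; exact ⟨μ, hμ, rfl⟩
      have hsqlt : sq ν < kap := by
        apply sSup_lt_kap
        · rw [hset]
          exact (Cardinal.mk_range_le).trans (mk_Iio_le_a1 (hν.trans om1_lt_kap))
        · rintro x ⟨μ, hμ, rfl⟩
          exact (IH μ hμ (hμ.trans hν)).2
      refine ⟨hsqlt, ?_⟩
      rw [hg]
      simp only [hD', dif_pos hsqlt]
      exact hD1 _ hsqlt
  -- the covering sets
  set Bs : Set.Iio om1.{u} → Set Idx.{u} := fun ν =>
    {α | A α ∩ Set.Iio (g ν.1) ⊆ Set.Iio (sq ν.1)} with hBs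
  have hBsmall : ∀ ν, #(Bs ν) ≤ (aleph 1 : Cardinal.{u+1}) := by
    intro ⟨ν, hν⟩
    have h1 := (hbound ν hν).1
    have : Bs ⟨ν, hν⟩ = {α : Idx.{u} | A α ∩ Set.Iio (D (sq ν) h1) ⊆ Set.Iio (sq ν)} := by
      rw [hBs]; simp only [hg, hD', dif_pos h1]
    rw [this]
    exact hD2 _ h1
  have hcov : (Set.univ : Set Idx.{u}) ⊆ ⋃ ν, Bs ν := by
    intro α _
    rw [Set.mem_iUnion]
    by_contra hnot
    push_neg at hnot
    -- α not in any Bs ν : pick witnesses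
    have hw : ∀ ν : Set.Iio om1.{u}, ∃ x, x ∈ A α ∧ x < g ν.1 ∧ sq ν.1 ≤ x := by
      intro ν
      have := hnot ν
      rw [hBs] at this
      simp only [Set.mem_setOf_eq, Set.subset_def, not_forall] at this
      obtain ⟨x, hx, hnx⟩ := this
      rcases hx with ⟨hxA, hxlt⟩
      exact ⟨x, hxA, hxlt, not_lt.mp hnx⟩
    choose x hx1 hx2 hx3 using hw
    have hinj : Function.Injective (fun ν : Set.Iio om1.{u} => (⟨x ν, hx1 ν⟩ : A α)) := by
      have key : ∀ ν ν' : Set.Iio om1.{u}, ν.1 < ν'.1 → x ν < x ν' := by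
        intro ν ν' hlt
        have h1 : g ν.1 ≤ sq ν'.1 := by
          apply le_csSup
          · refine ⟨kap, ?_⟩
            rintro y ⟨μ, hμ, rfl⟩
            exact ((hbound μ (hμ.trans ν'.2)).2).le
          · exact ⟨ν.1, hlt, rfl⟩
        exact lt_of_lt_of_le (hx2 ν) (h1.trans (hx3 ν'))
      intro ν ν' he
      simp only [Subtype.mk.injEq] at he
      rcases lt_trichotomy ν.1 ν'.1 with h | h | h
      · exact absurd he (key ν ν' h).ne
      · exact Subtype.ext h
      · exact absurd he.symm (key ν' ν h).ne
    have hle : #(Set.Iio om1.{u}) ≤ #(A α) := Cardinal.mk_le_of_injective hinj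
    rw [Ordinal.mk_Iio_ordinal, card_ord] at hle
    have hcnt : #(A α) ≤ ℵ₀ := by
      rw [Cardinal.mk_le_aleph0_iff]
      exact (hc α).to_subtype
    have : Cardinal.lift.{u+1} (aleph 1 : Cardinal.{u}) ≤ ℵ₀ := hle.trans hcnt
    rw [lift_aleph, Ordinal.lift_one] at this
    exact absurd this (aleph0_lt_aleph_one).not_ge
  have := mk_le_of_cover Bs Set.univ (mk_Iio_le_a1 om1_lt_kap) hBsmall hcov
  rw [Cardinal.mk_univ, mk_Idx] at this
  exact absurd this (aleph_lt_aleph.mpr one_lt_two).not_ge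





lemma kap_isLimit : Order.IsSuccLimit (kap.{u}) := Cardinal.isSuccLimit_ord (aleph0_le_aleph 2)

-- Step 2
lemma exists_root (CH : (continuum : Cardinal.{u+1}) = aleph 1)
    (A : Idx.{u} → Set Ordinal.{u}) (hc : ∀ o, (A o).Countable)
    {γ : Ordinal.{u}} (hγ : γ < kap.{u})
    (hP : ∀ δ, δ < kap.{u} → ¬ (#{α : Idx.{u} | A α ∩ Set.Iio δ ⊆ Set.Iio γ} ≤ aleph 1)) :
    ∃ R : Set Ordinal.{u}, R.Countable ∧ R ⊆ Set.Iio γ ∧ ∀ δ, δ < kap.{u} →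
      ¬ (#{α : Idx.{u} | A α ∩ Set.Iio γ = R ∧ A α ∩ Set.Iio δ ⊆ Set.Iio γ} ≤ aleph 1) := by
  by_contra H
  push_neg at H
  have H' : ∀ c : ℕ → Option (Set.Iio γ), ∃ δ, δ < kap.{u} ∧
      #{α : Idx.{u} | A α ∩ Set.Iio γ = Phi γ c ∧ A α ∩ Set.Iio δ ⊆ Set.Iio γ} ≤ aleph 1 :=
    fun c => H (Phi γ c) (Phi_countable γ c) (Phi_subset γ c)
  choose dl hdl1 hdl2 using H'
  set δs : Ordinal.{u} := sSup (Set.range dl) with hδs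
  have hδslt : δs < kap := by
    apply sSup_lt_kap
    · exact (Cardinal.mk_range_le).trans (mk_codes_le CH (card_le_a1 hγ))
    · rintro x ⟨c, rfl⟩; exact hdl1 c
  set W : Set Idx.{u} := {α | A α ∩ Set.Iio δs ⊆ Set.Iio γ} with hW
  set C : (ℕ → Option (Set.Iio γ)) → Set Idx.{u} := fun c =>
    {α | A α ∩ Set.Iio γ = Phi γ c ∧ A α ∩ Set.Iio (dl c) ⊆ Set.Iio γ} with hC
  have hcov : W ⊆ ⋃ c, C c := by
    intro α hα
    have htr : (A α ∩ Set.Iio γ).Countable := (hc α).mono Set.inter_subset_left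
    obtain ⟨c, hcc⟩ := Phi_surj γ htr Set.inter_subset_right
    rw [Set.mem_iUnion]
    refine ⟨c, hcc.symm, ?_⟩
    intro x hx
    refine hα ⟨hx.1, ?_⟩
    calc x < dl c := hx.2
      _ ≤ δs := le_csSup ⟨kap, by rintro y ⟨c', rfl⟩; exact (hdl1 c').le⟩ ⟨c, rfl⟩
  have := mk_le_of_cover C W (mk_codes_le CH (card_le_a1 hγ)) hdl2 hcov
  exact hP δs hδslt this

-- Step 3: main lemma at ordinal level
lemma main (CH : (continuum : Cardinal.{u+1}) = aleph 1)
    (A : Idx.{u} → Set Ordinal.{u}) (hc : ∀ o, (A o).Countable)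
    (hsub : ∀ o, A o ⊆ Set.Iio kap.{u}) :
    ∃ B : Set Idx.{u}, #B = (aleph 2 : Cardinal.{u+1}) ∧
      ∃ R : Set Ordinal.{u}, R.Countable ∧
        ∀ a ∈ B, ∀ b ∈ B, a ≠ b → A a ∩ A b = R := by
  obtain ⟨γ, hγ, hP⟩ := exists_gamma A hc
  obtain ⟨R, hRc, hRsub, hQ⟩ := exists_root CH A hc hγ hP
  haveI : Nonempty Idx.{u} := ⟨⟨0, kap_isLimit.bot_lt⟩⟩
  -- bound function
  set bnd : Idx.{u} → Ordinal.{u} := fun α => sSup (A α) + 1 with hbnd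
  have hbnd1 : ∀ α, ∀ x ∈ A α, x < bnd α := by
    intro α x hx
    have : x ≤ sSup (A α) := le_csSup ⟨kap, fun y hy => (hsub α hy).le⟩ hx
    rw [hbnd]
    exact this.trans_lt (lt_add_one _)
  have hbnd2 : ∀ α, bnd α < kap := by
    intro α
    have h1 : sSup (A α) < kap := by
      apply sSup_lt_kap
      · have : #(A α) ≤ ℵ₀ := by
          rw [Cardinal.mk_le_aleph0_iff]; exact (hc α).to_subtype
        exact this.trans (aleph0_le_aleph 1)
      · exact fun x hx => hsub α hx
    show sSup (A α) + 1 < kap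
    rw [Ordinal.add_one_eq_succ]
    exact kap_isLimit.succ_lt h1
  -- candidate existence
  set T : Ordinal.{u} → Set Idx.{u} := fun δ =>
    {α | A α ∩ Set.Iio γ = R ∧ A α ∩ Set.Iio δ ⊆ Set.Iio γ} with hT
  have hprev_small : ∀ (i : Ordinal.{u}) (IH : ∀ j, j < i → Idx.{u}), i < kap →
      #({β : Idx.{u} | ∃ j, ∃ h : j < i, IH j h = β}) ≤ (aleph 1 : Cardinal.{u+1}) := by
    intro i IH hi
    have : {β : Idx.{u} | ∃ j, ∃ h : j < i, IH j h = β} =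
        Set.range (fun j : Set.Iio i => IH j.1 j.2) := by
      ext β; constructor
      · rintro ⟨j, hj, rfl⟩; exact ⟨⟨j, hj⟩, rfl⟩
      · rintro ⟨⟨j, hj⟩, rfl⟩; exact ⟨j, hj, rfl⟩
    rw [this]
    exact (Cardinal.mk_range_le).trans (mk_Iio_le_a1 hi)
  have hdel_lt : ∀ (i : Ordinal.{u}) (IH : ∀ j, j < i → Idx.{u}), i < kap →
      max γ (sSup (bnd '' {β : Idx.{u} | ∃ j, ∃ h : j < i, IH j h = β})) < kap := by
    intro i IH hi
    refine max_lt hγ (sSup_lt_kap ?_ ?_)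
    · exact (Cardinal.mk_image_le).trans (hprev_small i IH hi)
    · rintro x ⟨β, _, rfl⟩; exact hbnd2 β
  have hex : ∀ (i : Ordinal.{u}) (IH : ∀ j, j < i → Idx.{u}), i < kap →
      ∃ α : Idx.{u}, α ∈ T (max γ (sSup (bnd '' {β : Idx.{u} | ∃ j, ∃ h : j < i, IH j h = β})))
        ∧ α ∉ {β : Idx.{u} | ∃ j, ∃ h : j < i, IH j h = β} := by
    intro i IH hi
    by_contra hno
    push_neg at hno
    have hsubT : T (max γ (sSup (bnd '' {β : Idx.{u} | ∃ j, ∃ h : j < i, IH j h = β}))) ⊆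
        {β : Idx.{u} | ∃ j, ∃ h : j < i, IH j h = β} := fun α hα => hno α hα
    have := (Cardinal.mk_le_mk_of_subset hsubT).trans (hprev_small i IH hi)
    exact hQ _ (hdel_lt i IH hi) this
  set body : (i : Ordinal.{u}) → ((j : Ordinal.{u}) → j < i → Idx.{u}) → Idx.{u} :=
    fun i IH => if h : i < kap then Classical.choose (hex i IH h) else Classical.arbitrary _
    with hbody
  set G : Ordinal.{u} → Idx.{u} := WellFounded.fix Ordinal.lt_wf body with hGdef
  have hGeq : ∀ i, G i = body i (fun j _ => G j) := fun i =>
    WellFounded.fix_eq Ordinal.lt_wf body i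
  set prevG : Ordinal.{u} → Set Idx.{u} := fun i => {β | ∃ j, ∃ _ : j < i, G j = β} with hprevG
  set dG : Ordinal.{u} → Ordinal.{u} := fun i => max γ (sSup (bnd '' prevG i)) with hdG
  have hinv : ∀ i, i < kap.{u} → G i ∈ T (dG i) ∧ G i ∉ prevG i := by
    intro i hi
    have h1 : G i = Classical.choose (hex i (fun j _ => G j) hi) := by
      rw [hGeq i]; exact dif_pos hi
    have h2 := Classical.choose_spec (hex i (fun j _ => G j) hi)
    rw [← h1] at h2
    exact h2
  -- the family
  set F : Idx.{u} → Idx.{u} := fun i => G i.1 with hF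
  have hFmem : ∀ (i j : Idx.{u}), i.1 < j.1 → F i ∈ prevG j.1 := by
    intro i j hij
    exact ⟨i.1, hij, rfl⟩
  have hFinj : Function.Injective F := by
    intro i j he
    by_contra hne
    rcases lt_trichotomy i.1 j.1 with h | h | h
    · have hm := hFmem i j h
      rw [he] at hm
      exact (hinv j.1 j.2).2 hm
    · exact hne (Subtype.ext h)
    · have hm := hFmem j i h
      rw [← he] at hm
      exact (hinv i.1 i.2).2 hm
  have hkey : ∀ i j : Idx.{u}, i.1 < j.1 → A (F i) ∩ A (F j) = R := by
    intro i j hij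
    have hTi := (hinv i.1 i.2).1
    have hTj := (hinv j.1 j.2).1
    rw [hT] at hTi hTj
    apply Set.Subset.antisymm
    · intro x hx
      have hxbnd : x < bnd (F i) := hbnd1 _ _ hx.1
      have hble : bnd (F i) ≤ dG j.1 := by
        refine le_trans ?_ (le_max_right _ _)
        apply le_csSup
        · refine ⟨kap, ?_⟩
          rintro y ⟨β, _, rfl⟩
          exact (hbnd2 β).le
        · exact ⟨F i, hFmem i j hij, rfl⟩
      have : x ∈ A (F j) ∩ Set.Iio (dG j.1) := ⟨hx.2, hxbnd.trans_le hble⟩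
      have hxγ : x ∈ Set.Iio γ := hTj.2 this
      rw [← hTj.1]
      exact ⟨hx.2, hxγ⟩
    · intro x hx
      have hxi : x ∈ A (F i) := by rw [← hTi.1] at hx; exact hx.1
      have hxj : x ∈ A (F j) := by rw [← hTj.1] at hx; exact hx.1
      exact ⟨hxi, hxj⟩
  refine ⟨Set.range F, ?_, R, hRc, ?_⟩
  · rw [Cardinal.mk_range_eq F hFinj, mk_Idx]
  · rintro a ⟨i, rfl⟩ b ⟨j, rfl⟩ hab
    have hij : i ≠ j := fun h => hab (h ▸ rfl)
    rcases lt_trichotomy i.1 j.1 with h | h | h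
    · exact hkey i j h
    · exact absurd (Subtype.ext h) hij
    · rw [Set.inter_comm]; exact hkey j i h


end DS
/-- Under CH, every family of countable sets indexed by `ω₂` contains a subfamily of
cardinality `ω₂` forming a Δ-system with a (countable) root `R`. -/
theorem stmt_16 {α : Type*} (CH : Cardinal.continuum = Cardinal.aleph 1)
    (A : {o : Ordinal // o < (Cardinal.aleph 2).ord} → Set α)
    (hA : ∀ o, (A o).Countable) :
    ∃ B : Set {o : Ordinal // o < (Cardinal.aleph 2).ord},
      Cardinal.mk B = Cardinal.aleph 2 ∧
      ∃ R : Set α, R.Countable ∧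
        ∀ a ∈ B, ∀ b ∈ B, a ≠ b → A a ∩ A b = R := by
  classical
  -- reduce to the ordinal-valued case
  have CH' := DS.ch_transfer CH
  set U : Set α := ⋃ o, A o with hU
  have pick : ∀ y : U, ∃ o : {o : Ordinal // o < (Cardinal.aleph 2).ord}, y.1 ∈ A o := fun y => Set.mem_iUnion.mp y.2
  choose o ho using pick
  have enum : ∀ i : {o : Ordinal // o < (Cardinal.aleph 2).ord}, ∃ f : (A i) → ℕ, Function.Injective f :=
    fun i => Set.countable_iff_exists_injective.mp (hA i)
  choose e he using enum
  set e' : {o : Ordinal // o < (Cardinal.aleph 2).ord} → α → ℕ := fun i x => if h : x ∈ A i then e i ⟨x, h⟩ else 0 with he'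
  set g : U → {o : Ordinal // o < (Cardinal.aleph 2).ord} × ℕ := fun y => (o y, e' (o y) y.1) with hg
  have hginj : Function.Injective g := by
    intro y z hyz
    simp only [hg, Prod.mk.injEq] at hyz
    obtain ⟨h1, h2⟩ := hyz
    rw [h1] at h2
    have hyA : (y : α) ∈ A (o z) := h1 ▸ ho y
    simp only [he', dif_pos hyA, dif_pos (ho z)] at h2
    have := he (o z) h2
    have h3 := congrArg Subtype.val this
    exact Subtype.ext h3
  have hcard : Cardinal.mk ({o : Ordinal // o < (Cardinal.aleph 2).ord} × ℕ) = Cardinal.mk {o : Ordinal // o < (Cardinal.aleph 2).ord} := by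
    rw [Cardinal.mk_prod, Cardinal.lift_uzero, Cardinal.mk_nat, Cardinal.lift_aleph0]
    rw [DS.mk_Idx, Cardinal.mul_eq_max (Cardinal.aleph0_le_aleph 2) le_rfl,
      max_eq_left (Cardinal.aleph0_le_aleph 2)]
  obtain ⟨emb2⟩ := Cardinal.eq.mp hcard
  set embU : U → {o : Ordinal // o < (Cardinal.aleph 2).ord} := fun y => emb2 (g y) with hembU
  have hembinj : Function.Injective embU := fun y z h => hginj (emb2.injective h)
  set vE : U → Ordinal := fun y => (embU y).1 with hvE
  have hvEinj : Function.Injective vE := fun y z h => hembinj (Subtype.ext h)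
  set A' : {o : Ordinal // o < (Cardinal.aleph 2).ord} → Set Ordinal := fun i => vE '' {y : U | y.1 ∈ A i} with hA'
  have hA'c : ∀ i, (A' i).Countable := by
    intro i
    exact ((hA i).preimage Subtype.val_injective).image vE
  have hA'sub : ∀ i, A' i ⊆ Set.Iio DS.kap := by
    rintro i x ⟨y, _, rfl⟩
    exact (embU y).2
  obtain ⟨B, hB, R', hR'c, hpair⟩ := DS.main CH' A' hA'c hA'sub
  refine ⟨B, hB, Subtype.val '' (vE ⁻¹' R'), ?_, ?_⟩
  · exact Set.Countable.image (hR'c.preimage hvEinj) _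
  · intro a ha b hb hab
    have hab' := hpair a ha b hb hab
    ext x
    constructor
    · intro hx
      have hxU : x ∈ U := Set.mem_iUnion.mpr ⟨a, hx.1⟩
      set y : U := ⟨x, hxU⟩ with hy
      have hya : vE y ∈ A' a := ⟨y, hx.1, rfl⟩
      have hyb : vE y ∈ A' b := ⟨y, hx.2, rfl⟩
      have : vE y ∈ R' := by rw [← hab']; exact ⟨hya, hyb⟩
      exact ⟨y, this, rfl⟩
    · rintro ⟨y, hy, rfl⟩
      have hy' : vE y ∈ A' a ∩ A' b := by rw [hab']; exact hy
      constructor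
      · obtain ⟨z, hz, hz2⟩ := hy'.1
        have : z = y := hvEinj hz2
        rw [← this]; exact hz
      · obtain ⟨z, hz, hz2⟩ := hy'.2
        have : z = y := hvEinj hz2
        rw [← this]; exact hz
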